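/- Let G be a finite connected graph with exactly as many edges as vertices (so G contains exactly one cycle). Then the spectral radius of its non-backtracking matrix equals 1. -/

import Mathlib

open Matrix

/-- The type of directed edges of a simple graph. -/
abbrev dirEdge {V : Type*} (G : SimpleGraph V) : Type _ := {e : V × V // G.Adj e.1 e.2}

noncomputable instance {V : Type*} [Finite V] (G : SimpleGraph V) : Fintype (dirEdge G) :=
  Fintype.ofFinite _

/-- The non-backtracking matrix `B_{(i→j),(k→l)} = δ_{jk} (1 - δ_{il})`. -/
def nbMatrix {V : Type*} [DecidableEq V] (G : SimpleGraph V) :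
    Matrix (dirEdge G) (dirEdge G) ℝ :=
  Matrix.of fun e f => if e.val.2 = f.val.1 ∧ e.val.1 ≠ f.val.2 then (1 : ℝ) else 0

set_option linter.unusedSectionVars false

universe u

section Base
variable {V : Type u} [Fintype V] [DecidableEq V] (G : SimpleGraph V) [DecidableRel G.Adj]

/-- the unique neighbor of `y` other than `x`, when `deg y = 2`. -/
noncomputable def otherNbr (x y : V) : V :=
  if h : ((G.neighborFinset y).erase x).Nonempty then h.choose else x

lemma otherNbr_spec {x y : V} (hxy : G.Adj x y) (hd : G.degree y = 2) :
    ∀ z, (G.Adj y z ∧ z ≠ x) ↔ z = otherNbr G x y := by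
  have hx : x ∈ G.neighborFinset y := by
    simpa [SimpleGraph.mem_neighborFinset] using hxy.symm
  have hcard : ((G.neighborFinset y).erase x).card = 1 := by
    rw [Finset.card_erase_of_mem hx]
    simp [SimpleGraph.card_neighborFinset_eq_degree, hd]
  obtain ⟨z₀, hz₀⟩ := Finset.card_eq_one.mp hcard
  have hne : ((G.neighborFinset y).erase x).Nonempty := by
    rw [hz₀]; exact ⟨z₀, Finset.mem_singleton_self z₀⟩
  have hmem := hne.choose_spec
  have hon : otherNbr G x y = z₀ := by
    have h1 : otherNbr G x y = hne.choose := by unfold otherNbr; exact dif_pos hne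
    rw [h1]
    exact Finset.mem_singleton.mp (by rw [← hz₀]; exact hmem)
  intro z
  rw [hon]
  constructor
  · rintro ⟨ha, hne'⟩
    have : z ∈ (G.neighborFinset y).erase x := by
      simp [Finset.mem_erase, hne', SimpleGraph.mem_neighborFinset, ha]
    rw [hz₀] at this; exact Finset.mem_singleton.mp this
  · rintro rfl
    have : z ∈ (G.neighborFinset y).erase x := by rw [hz₀]; exact Finset.mem_singleton_self _
    rw [Finset.mem_erase, SimpleGraph.mem_neighborFinset] at this
    exact ⟨this.2, this.1⟩

/-- successor permutation on directed edges of a 2-regular graph. -/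
noncomputable def nbSucc (hdeg : ∀ v, G.degree v = 2) : dirEdge G ≃ dirEdge G where
  toFun e := ⟨(e.val.2, otherNbr G e.val.1 e.val.2),
    (((otherNbr_spec G e.prop (hdeg e.val.2)) _).mpr rfl).1⟩
  invFun e := ⟨(otherNbr G e.val.2 e.val.1, e.val.1),
    (((otherNbr_spec G e.prop.symm (hdeg e.val.1)) _).mpr rfl).1.symm⟩
  left_inv e := by
    obtain ⟨⟨x, y⟩, h⟩ := e
    apply Subtype.ext
    simp only
    have hz := ((otherNbr_spec G h (hdeg y)) _).mpr rfl
    have : x = otherNbr G (otherNbr G x y) y := by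
      refine ((otherNbr_spec G hz.1.symm (hdeg y)) x).mp ⟨h.symm, ?_⟩
      exact fun hx => hz.2 hx.symm
    simp [← this]
  right_inv e := by
    obtain ⟨⟨x, y⟩, h⟩ := e
    apply Subtype.ext
    simp only
    have hz := ((otherNbr_spec G h.symm (hdeg x)) _).mpr rfl
    have : y = otherNbr G (otherNbr G y x) x := by
      refine ((otherNbr_spec G hz.1.symm (hdeg x)) y).mp ⟨h, ?_⟩
      exact fun hy => hz.2 hy.symm
    simp [← this]

lemma nbMatrix_eq_perm (hdeg : ∀ v, G.degree v = 2) (e f : dirEdge G) :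
    nbMatrix G e f = if f = nbSucc G hdeg e then 1 else 0 := by
  rw [nbMatrix]
  simp only [Matrix.of_apply]
  congr 1
  rw [eq_iff_iff]
  constructor
  · rintro ⟨h1, h2⟩
    apply Subtype.ext
    have hy : f.val.2 = otherNbr G e.val.1 e.val.2 := by
      refine (otherNbr_spec G e.prop (hdeg e.val.2) f.val.2).mp ⟨?_, fun h => h2 h.symm⟩
      rw [h1]; exact f.prop
    exact Prod.ext h1.symm hy
  · rintro rfl
    have hz := ((otherNbr_spec G e.prop (hdeg e.val.2)) _).mpr rfl
    exact ⟨rfl, fun h => hz.2 h.symm⟩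

end Base

section Eigen
variable {V : Type u} [Fintype V] [DecidableEq V] (G : SimpleGraph V) [DecidableRel G.Adj]

lemma nbC_mulVec (hdeg : ∀ v, G.degree v = 2) (v : dirEdge G → ℂ) (e : dirEdge G) :
    (((nbMatrix G).map Complex.ofReal).mulVec v) e = v (nbSucc G hdeg e) := by
  unfold Matrix.mulVec dotProduct
  have : ∀ f, ((nbMatrix G).map Complex.ofReal) e f * v f
      = if f = nbSucc G hdeg e then v f else 0 := by
    intro f
    rw [Matrix.map_apply, nbMatrix_eq_perm G hdeg]
    by_cases h : f = nbSucc G hdeg e <;> simp [h]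
  rw [Finset.sum_congr rfl fun f _ => this f]
  simp

lemma base_concl [Nonempty (dirEdge G)] (hdeg : ∀ v, G.degree v = 2) :
    (∃ γ : ℂ, (((nbMatrix G).map Complex.ofReal) - γ • 1).det = 0 ∧ ‖γ‖ = 1) ∧
    (∀ γ : ℂ, (((nbMatrix G).map Complex.ofReal) - γ • 1).det = 0 → ‖γ‖ ≤ 1) := by
  set σ := nbSucc G hdeg with hσ
  set Bc := (nbMatrix G).map Complex.ofReal with hBc
  have key : ∀ γ : ℂ, (Bc - γ • 1).det = 0 → ‖γ‖ = 1 ∨ γ = 0 := by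
    intro γ hdet
    obtain ⟨v, hv0, hv⟩ := (Matrix.exists_mulVec_eq_zero_iff).mpr hdet
    have hBv : ∀ e, v (σ e) = γ * v e := by
      intro e
      have h1 := congrFun hv e
      rw [Matrix.sub_mulVec, Matrix.smul_mulVec, Matrix.one_mulVec] at h1
      have h2 : (Bc *ᵥ v) e - γ * v e = 0 := by simpa using h1
      rw [nbC_mulVec G hdeg] at h2
      exact sub_eq_zero.mp h2
    have hiter : ∀ (k : ℕ) (e), v ((σ ^ k) e) = γ ^ k * v e := by
      intro k
      induction k with
      | zero => intro e; simp
      | succ n ih =>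
        intro e
        rw [pow_succ', pow_succ']
        have : ((σ * σ ^ n) e) = σ ((σ ^ n) e) := rfl
        rw [this, hBv, ih, mul_assoc]
    obtain ⟨e₀, he₀⟩ := Function.ne_iff.mp hv0
    have hN : σ ^ (orderOf σ) = 1 := pow_orderOf_eq_one σ
    have hNpos : 0 < orderOf σ := orderOf_pos σ
    have : γ ^ (orderOf σ) * v e₀ = v e₀ := by
      have := hiter (orderOf σ) e₀
      rw [hN] at this
      simpa using this.symm
    have hγN : γ ^ (orderOf σ) = 1 := by
      have hne : v e₀ ≠ 0 := by simpa using he₀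
      field_simp at this
      tauto
    left
    have hnorm : ‖γ‖ ^ (orderOf σ) = 1 := by
      rw [← norm_pow, hγN, norm_one]
    rcases lt_trichotomy ‖γ‖ 1 with h | h | h
    · exfalso
      have := pow_lt_one₀ (norm_nonneg γ) h hNpos.ne'
      rw [hnorm] at this; exact lt_irrefl _ this
    · exact h
    · exfalso
      have := one_lt_pow₀ h hNpos.ne'
      rw [hnorm] at this; exact lt_irrefl _ this
  constructor
  · refine ⟨1, ?_, by simp⟩
    rw [← Matrix.exists_mulVec_eq_zero_iff]
    refine ⟨fun _ => 1, by simp [funext_iff], ?_⟩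
    funext e
    rw [Matrix.sub_mulVec, Matrix.smul_mulVec, Matrix.one_mulVec]
    simp [hBc, nbC_mulVec G hdeg (fun _ => 1) e]
  · intro γ hγ
    rcases key γ hγ with h | h
    · exact le_of_eq h
    · simp [h]

end Eigen

section Conn
variable {V : Type u} [DecidableEq V] (G : SimpleGraph V)

lemma exists_walk_avoid (u : V)
    (huniq : ∀ y z, G.Adj u y → G.Adj u z → y = z) :
    ∀ (n : ℕ) {a b : V} (p : G.Walk a b), p.length ≤ n → a ≠ u → b ≠ u →
      ∃ q : G.Walk a b, u ∉ q.support := by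
  intro n
  induction n with
  | zero =>
    intro a b p hlen ha hb
    refine ⟨p, ?_⟩
    cases p with
    | nil => simpa using ha.symm
    | cons h q => simp at hlen
  | succ n ih =>
    intro a b p hlen ha hb
    by_cases hu : u ∈ p.support
    · have hspec := p.take_spec hu
      set q₁ := p.takeUntil u hu with hq₁
      set q₂ := p.dropUntil u hu with hq₂
      have hlen12 : q₁.length + q₂.length = p.length := by
        rw [← hspec]; exact (SimpleGraph.Walk.length_append _ _).symm
      obtain ⟨x, hadj, t, hq2⟩ := SimpleGraph.Walk.exists_eq_cons_of_ne (Ne.symm hb) q₂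
      obtain ⟨y, hadj', t', hq1r⟩ := SimpleGraph.Walk.exists_eq_cons_of_ne (Ne.symm ha) q₁.reverse
      have hxy : y = x := huniq _ _ hadj' hadj
      subst hxy
      have hq1len : q₁.length = t'.length + 1 := by
        have := congrArg SimpleGraph.Walk.length hq1r
        simpa using this
      have hq2len : q₂.length = t.length + 1 := by
        rw [hq2]; simp
      have hnew : (t'.reverse.append t).length ≤ n := by
        rw [SimpleGraph.Walk.length_append, SimpleGraph.Walk.length_reverse]
        omega
      exact ih (t'.reverse.append t) hnew ha hb
    · exact ⟨p, hu⟩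

lemma reachable_induce (s : Set V) :
    ∀ {a b : V} (p : G.Walk a b) (_ : ∀ x ∈ p.support, x ∈ s),
      (G.induce s).Reachable ⟨a, by simp_all⟩ ⟨b, by simp_all⟩ := by
  intro a b p
  induction p with
  | nil => intro h; exact SimpleGraph.Reachable.refl _
  | cons hadj q ih =>
    intro h
    have h' : ∀ x ∈ q.support, x ∈ s := fun x hx =>
      h x (by simp [SimpleGraph.Walk.support_cons, hx])
    have hadj' : (G.induce s).Adj ⟨_, h _ (SimpleGraph.Walk.start_mem_support _)⟩
        ⟨_, h' _ (SimpleGraph.Walk.start_mem_support _)⟩ := by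
      simpa [SimpleGraph.comap_adj] using hadj
    exact (hadj'.reachable).trans (ih h')

end Conn

section Step
variable {V : Type u} [Fintype V] [DecidableEq V] (G : SimpleGraph V) [DecidableRel G.Adj]

variable (u w : V)

/-- vertices other than `u` -/
def sOf (u : V) : Set V := {x | x ≠ u}

instance : DecidablePred (· ∈ sOf u) := fun x => inferInstanceAs (Decidable (x ≠ u))

noncomputable instance : DecidableRel (G.induce (sOf u)).Adj :=
  fun _ _ => Classical.dec _

lemma eq_a_of_fst (huw : G.Adj u w) (huniq : ∀ z, G.Adj u z → z = w)
    (e : dirEdge G) (h : e.val.1 = u) : e = ⟨(u, w), huw⟩ := by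
  have h2 : e.val.2 = w := huniq _ (h ▸ e.prop)
  exact Subtype.ext (Prod.ext h h2)

lemma eq_b_of_snd (huw : G.Adj u w) (huniq : ∀ z, G.Adj u z → z = w)
    (e : dirEdge G) (h : e.val.2 = u) : e = ⟨(w, u), huw.symm⟩ := by
  have h2 : e.val.1 = w := huniq _ (h ▸ e.prop.symm)
  exact Subtype.ext (Prod.ext h2 h)

/-- embedding of directed edges of the induced graph -/
def embE (e : dirEdge (G.induce (sOf u))) : dirEdge G :=
  ⟨(e.val.1.val, e.val.2.val), e.prop⟩

lemma embE_fst_ne (e : dirEdge (G.induce (sOf u))) : (embE G u e).val.1 ≠ u := e.val.1.prop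
lemma embE_snd_ne (e : dirEdge (G.induce (sOf u))) : (embE G u e).val.2 ≠ u := e.val.2.prop

/-- the reindexing equivalence -/
noncomputable def edgeEquiv (huw : G.Adj u w) (huniq : ∀ z, G.Adj u z → z = w) :
    (Unit ⊕ (dirEdge (G.induce (sOf u)) ⊕ Unit)) ≃ dirEdge G where
  toFun x := match x with
    | Sum.inl _ => ⟨(w, u), huw.symm⟩
    | Sum.inr (Sum.inl e) => embE G u e
    | Sum.inr (Sum.inr _) => ⟨(u, w), huw⟩
  invFun e :=
    if h2 : e.val.2 = u then Sum.inl ()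
    else if h1 : e.val.1 = u then Sum.inr (Sum.inr ())
    else Sum.inr (Sum.inl ⟨(⟨e.val.1, h1⟩, ⟨e.val.2, h2⟩), e.prop⟩)
  left_inv x := by
    rcases x with _ | e | _
    · simp
    · have h1 := embE_fst_ne G u e
      have h2 := embE_snd_ne G u e
      simp only [dif_neg h2, dif_neg h1]
      simp [embE]
    · simp only [dif_neg huw.ne', dif_pos]
  right_inv e := by
    by_cases h2 : e.val.2 = u
    · simp only [dif_pos h2]
      exact (eq_b_of_snd G u w huw huniq e h2).symm
    · by_cases h1 : e.val.1 = u
      · simp only [dif_neg h2, dif_pos h1]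
        exact (eq_a_of_fst G u w huw huniq e h1).symm
      · simp only [dif_neg h2, dif_neg h1]
        exact Subtype.ext (by simp [embE])

lemma nb_row_b (huw : G.Adj u w) (huniq : ∀ z, G.Adj u z → z = w)
    (f : dirEdge G) : nbMatrix G ⟨(w, u), huw.symm⟩ f = 0 := by
  rw [nbMatrix]
  simp only [Matrix.of_apply]
  rw [if_neg]
  rintro ⟨h1, h2⟩
  have := eq_a_of_fst G u w huw huniq f h1.symm
  apply h2
  rw [this]

lemma nb_col_a (huw : G.Adj u w) (huniq : ∀ z, G.Adj u z → z = w)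
    (e : dirEdge G) : nbMatrix G e ⟨(u, w), huw⟩ = 0 := by
  rw [nbMatrix]
  simp only [Matrix.of_apply]
  rw [if_neg]
  rintro ⟨h1, h2⟩
  have := eq_b_of_snd G u w huw huniq e h1
  apply h2
  rw [this]

lemma nb_emb (e f : dirEdge (G.induce (sOf u))) :
    nbMatrix G (embE G u e) (embE G u f) = nbMatrix (G.induce (sOf u)) e f := by
  rw [nbMatrix, nbMatrix]
  simp only [Matrix.of_apply, embE]
  congr 1
  rw [eq_iff_iff]
  constructor
  · rintro ⟨h1, h2⟩
    exact ⟨Subtype.ext h1, fun h => h2 (congrArg Subtype.val h)⟩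
  · rintro ⟨h1, h2⟩
    exact ⟨congrArg Subtype.val h1, fun h => h2 (Subtype.ext h)⟩

lemma embE_injective : Function.Injective (embE G u) := by
  rintro e f h
  apply Subtype.ext
  have h1 := congrArg (fun x => x.val.1) h
  have h2 := congrArg (fun x => x.val.2) h
  exact Prod.ext (Subtype.ext h1) (Subtype.ext h2)

lemma det_factor (huw : G.Adj u w) (huniq : ∀ z, G.Adj u z → z = w) (γ : ℂ) :
    ((nbMatrix G).map Complex.ofReal - γ • 1).det
      = γ ^ 2 * ((nbMatrix (G.induce (sOf u))).map Complex.ofReal - γ • 1).det := by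
  classical
  set G' := G.induce (sOf u) with hG'
  set M : Matrix (dirEdge G) (dirEdge G) ℂ := (nbMatrix G).map Complex.ofReal - γ • 1 with hM
  set M' : Matrix (dirEdge G') (dirEdge G') ℂ :=
    (nbMatrix G').map Complex.ofReal - γ • 1 with hM'
  set ι := edgeEquiv G u w huw huniq with hι
  have hMapp : ∀ x y, M x y = ((nbMatrix G x y : ℝ) : ℂ) - (if x = y then γ else 0) := by
    intro x y
    rw [hM]
    simp [Matrix.sub_apply, Matrix.smul_apply, Matrix.one_apply, Matrix.map_apply, mul_ite]
  have hM'app : ∀ x y, M' x y = ((nbMatrix G' x y : ℝ) : ℂ) - (if x = y then γ else 0) := by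
    intro x y
    rw [hM']
    simp [Matrix.sub_apply, Matrix.smul_apply, Matrix.one_apply, Matrix.map_apply, mul_ite]
  have hab : (⟨(w, u), huw.symm⟩ : dirEdge G) ≠ ⟨(u, w), huw⟩ := by
    intro h
    exact huw.ne' (congrArg (fun x => x.val.1) h)
  have hres : M.det = (M.submatrix ι ι).det := (Matrix.det_submatrix_equiv_self ι M).symm
  have hbι : ι (Sum.inl ()) = ⟨(w, u), huw.symm⟩ := rfl
  have haι : ι (Sum.inr (Sum.inr ())) = ⟨(u, w), huw⟩ := rfl
  have heι : ∀ e, ι (Sum.inr (Sum.inl e)) = embE G u e := fun _ => rfl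
  have hblock : M.submatrix ι ι = Matrix.fromBlocks (Matrix.of fun _ _ => -γ) 0
      (Matrix.of fun x _ => M (ι (Sum.inr x)) (ι (Sum.inl ())))
      (Matrix.fromBlocks M' 0
        (Matrix.of fun _ f => M (ι (Sum.inr (Sum.inr ()))) (ι (Sum.inr (Sum.inl f))))
        (Matrix.of fun _ _ => -γ)) := by
    ext i j
    rcases i with ⟨⟩ | e | ⟨⟩ <;> rcases j with ⟨⟩ | f | ⟨⟩ <;>
      simp only [Matrix.submatrix_apply, Matrix.fromBlocks_apply₁₁, Matrix.fromBlocks_apply₁₂,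
        Matrix.fromBlocks_apply₂₁, Matrix.fromBlocks_apply₂₂, Matrix.of_apply,
        Matrix.zero_apply, hbι, haι, heι]
    · -- b b
      rw [hMapp]
      rw [nb_row_b G u w huw huniq]
      simp
    · -- b, emb f
      rw [hMapp]
      rw [nb_row_b G u w huw huniq]
      rw [if_neg]
      · simp
      · intro h
        exact embE_snd_ne G u f (by rw [← h])
    · -- b a
      rw [hMapp, nb_row_b G u w huw huniq, if_neg hab]
      simp
    · -- emb e, emb f
      rw [hMapp, hM'app, nb_emb G u]
      congr 1
      congr 1
      rw [eq_iff_iff]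
      exact ⟨fun h => embE_injective G u h, fun h => congrArg _ h⟩
    · -- emb e, a
      rw [hMapp, nb_col_a G u w huw huniq, if_neg]
      · simp
      · intro h
        exact embE_fst_ne G u e (by rw [h])
    · -- a a
      rw [hMapp, nb_col_a G u w huw huniq, if_pos rfl]
      simp
  rw [hres, hblock, Matrix.det_fromBlocks_zero₁₂, Matrix.det_fromBlocks_zero₁₂]
  simp only [Matrix.det_unique, Matrix.of_apply]
  ring

end Step

section Main
variable {V : Type u}

def dirEdgeEquivDart [Fintype V] (G : SimpleGraph V) [DecidableRel G.Adj] :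
    dirEdge G ≃ G.Dart where
  toFun e := ⟨e.val, e.prop⟩
  invFun d := ⟨d.toProd, d.adj⟩
  left_inv e := rfl
  right_inv d := rfl

lemma card_dirEdge [Fintype V] [DecidableEq V] (G : SimpleGraph V) [DecidableRel G.Adj] :
    Fintype.card (dirEdge G) = 2 * G.edgeFinset.card := by
  rw [Fintype.card_congr (dirEdgeEquivDart G)]
  exact SimpleGraph.dart_card_eq_twice_card_edges G

end Main

lemma main_induction (n : ℕ) (V : Type u) [Fintype V] [DecidableEq V]
    (G : SimpleGraph V) [DecidableRel G.Adj] (hn : Fintype.card V = n) (hconn : G.Connected)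
    (hcard : G.edgeFinset.card = Fintype.card V) :
    (∃ γ : ℂ, (((nbMatrix G).map Complex.ofReal) - γ • 1).det = 0 ∧ ‖γ‖ = 1) ∧
    (∀ γ : ℂ, (((nbMatrix G).map Complex.ofReal) - γ • 1).det = 0 → ‖γ‖ ≤ 1) := by
  -- there is an edge
  have hpos : 0 < G.edgeFinset.card := by
    rw [hcard]
    have : Nonempty V := hconn.nonempty
    exact Fintype.card_pos
  obtain ⟨e₀, he₀⟩ := Finset.card_pos.mp hpos
  obtain ⟨x₀, y₀, hxy⟩ : ∃ x y, G.Adj x y := by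
    revert he₀
    refine Sym2.ind (fun x y h => ?_) e₀
    rw [SimpleGraph.mem_edgeFinset] at h
    exact ⟨x, y, h⟩
  have hNE : Nonempty (dirEdge G) := ⟨⟨(x₀, y₀), hxy⟩⟩
  have hnontriv : Nontrivial V := ⟨x₀, y₀, G.ne_of_adj hxy⟩
  by_cases hdeg2 : ∀ v, 2 ≤ G.degree v
  · -- 2-regular case
    have hreg : ∀ v, G.degree v = 2 := by
      by_contra hc
      push_neg at hc
      obtain ⟨v₀, hv₀⟩ := hc
      have hlt : ∑ _v : V, 2 < ∑ v, G.degree v := by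
        refine Finset.sum_lt_sum (fun i _ => hdeg2 i) ⟨v₀, Finset.mem_univ v₀, ?_⟩
        exact lt_of_le_of_ne (hdeg2 v₀) (Ne.symm hv₀)
      rw [SimpleGraph.sum_degrees_eq_twice_card_edges, hcard] at hlt
      simp [Finset.sum_const, Finset.card_univ, mul_comm] at hlt
    exact base_concl G hreg
  · -- leaf case
    push_neg at hdeg2
    obtain ⟨u, hu⟩ := hdeg2
    have hdeg1 : G.degree u = 1 := by
      have hpos' : 0 < G.degree u := by
        rw [SimpleGraph.degree_pos_iff_exists_adj]
        obtain ⟨v', hv'⟩ := exists_ne u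
        obtain ⟨p⟩ := hconn u v'
        obtain ⟨c, hc, q, rfl⟩ := SimpleGraph.Walk.exists_eq_cons_of_ne (Ne.symm hv') p
        exact ⟨c, hc⟩
      omega
    obtain ⟨w, hw⟩ := (Finset.card_eq_one (s := G.neighborFinset u)).mp
      (by rw [SimpleGraph.card_neighborFinset_eq_degree]; exact hdeg1)
    have huw : G.Adj u w := by
      have : w ∈ G.neighborFinset u := by rw [hw]; exact Finset.mem_singleton_self w
      rwa [SimpleGraph.mem_neighborFinset] at this
    have huniq : ∀ z, G.Adj u z → z = w := by
      intro z hz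
      have : z ∈ G.neighborFinset u := by rwa [SimpleGraph.mem_neighborFinset]
      rw [hw] at this
      exact Finset.mem_singleton.mp this
    have huniq2 : ∀ y z, G.Adj u y → G.Adj u z → y = z := fun y z hy hz =>
      (huniq y hy).trans (huniq z hz).symm
    set G' := G.induce (sOf u) with hG'
    have hconn' : G'.Connected := by
      rw [SimpleGraph.connected_iff]
      constructor
      · rintro ⟨a, ha⟩ ⟨b, hb⟩
        obtain ⟨p⟩ := hconn a b
        obtain ⟨q, hq⟩ := exists_walk_avoid G u huniq2 p.length p le_rfl ha hb
        exact reachable_induce G (sOf u) q (fun x hx hxu => hq (hxu ▸ hx))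
      · exact ⟨⟨w, huw.ne'⟩⟩
    have hcardV' : Fintype.card ↥(sOf u) = n - 1 := by
      have h1 : Fintype.card ↥(sOf u) = Fintype.card {x : V // x ≠ u} :=
        Fintype.card_congr (Equiv.refl _)
      rw [h1, Fintype.card_subtype_compl, Fintype.card_subtype_eq, hn]
    have hn2 : 2 ≤ n := by rw [← hn]; exact Fintype.one_lt_card
    have hdir : Fintype.card (dirEdge G)
        = Fintype.card (dirEdge (G.induce (sOf u))) + 2 := by
      rw [← Fintype.card_congr (edgeEquiv G u w huw huniq), Fintype.card_sum, Fintype.card_sum]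
      simp
      omega
    have hcard' : G'.edgeFinset.card = Fintype.card ↥(sOf u) := by
      have h1 := card_dirEdge G
      have h2 := card_dirEdge G'
      rw [hcard, hn] at h1
      rw [hcardV']
      have h3 : Fintype.card (dirEdge (SimpleGraph.induce (sOf u) G))
          = Fintype.card (dirEdge G') := rfl
      omega
    obtain ⟨⟨γ₀, hγ₀, hnγ₀⟩, hub⟩ :=
      main_induction (n - 1) ↥(sOf u) G' hcardV' hconn' (by rw [hcard', hcardV'])
    constructor
    · refine ⟨γ₀, ?_, hnγ₀⟩
      rw [det_factor G u w huw huniq γ₀, hγ₀]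
      ring
    · intro γ hγ
      rw [det_factor G u w huw huniq γ] at hγ
      rcases mul_eq_zero.mp hγ with h | h
      · have hγ0 : γ = 0 := pow_eq_zero_iff (n := 2) (by norm_num) |>.mp h
        simp [hγ0]
      · exact hub γ h
termination_by n
decreasing_by omega

/-- a finite connected graph with exactly as many edges as vertices has
non-backtracking spectral radius `1`: some (complex) eigenvalue has modulus `1`, and
all eigenvalues have modulus at most `1`. -/
theorem stmt6 {V : Type*} [Fintype V] [DecidableEq V] (G : SimpleGraph V)
    [DecidableRel G.Adj] (hconn : G.Connected)
    (hcard : G.edgeFinset.card = Fintype.card V) :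
    (∃ γ : ℂ, (((nbMatrix G).map Complex.ofReal) - γ • 1).det = 0 ∧ ‖γ‖ = 1) ∧
    (∀ γ : ℂ, (((nbMatrix G).map Complex.ofReal) - γ • 1).det = 0 → ‖γ‖ ≤ 1) :=
  main_induction (Fintype.card V) V G rfl hconn hcard
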